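/- Let (Ω, 𝔄, ℙ) be a probability space, σ > 0, and ε : Ω → ℝⁿ a square-integrable random vector with E[ε_i] = 0 and E[ε_i ε_j] = σ² δ_{ij} for all i, j. Let X and X̃ be n×m real matrices, Σ = XᵀX symmetric, D symmetric with X̃ᵀX̃ = Σ and XᵀX̃ = Σ − D, assume 2Σ − D and D invertible, let β ∈ ℝᵐ, Y = Xβ + ε, β̂⁽¹⁾ = (2Σ−D)⁻¹(X+X̃)ᵀY and β̂⁽²⁾ = D⁻¹(X−X̃)ᵀY. Then for all j, k ∈ {1,…,m}: E[(β̂⁽¹⁾_j − β_j)(β̂⁽¹⁾_k − β_k)] = 2σ² ((2Σ−D)⁻¹)_{jk} and E[(β̂⁽²⁾_j − β_j)(β̂⁽²⁾_k − β_k)] = 2σ² (D⁻¹)_{jk}. -/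

import Mathlib

open Matrix MeasureTheory


lemma cov_aux {n m : ℕ} {Ω : Type*} [MeasurableSpace Ω] (μ : Measure Ω)
    (σ : ℝ) (ε : Ω → Fin n → ℝ)
    (hL2 : ∀ i, MemLp (fun ω => ε ω i) 2 μ)
    (hcov : ∀ i j, ∫ ω, ε ω i * ε ω j ∂μ = if i = j then σ ^ 2 else 0)
    (A : Matrix (Fin m) (Fin n) ℝ) (j k : Fin m) :
    ∫ ω, (A *ᵥ ε ω) j * (A *ᵥ ε ω) k ∂μ = σ ^ 2 * (A * Aᵀ) j k := by
  have hint : ∀ i i' : Fin n, Integrable (fun ω => ε ω i * ε ω i') μ := by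
    intro i i'
    have h1 := ((hL2 i).add (hL2 i')).integrable_sq
    have h2 := (hL2 i).integrable_sq
    have h3 := (hL2 i').integrable_sq
    exact (((h1.sub h2).sub h3).div_const 2).congr
      (Filter.Eventually.of_forall fun ω => by simp only [Pi.sub_apply, Pi.add_apply]; ring)
  have key : ∀ ω, (A *ᵥ ε ω) j * (A *ᵥ ε ω) k
      = ∑ i, ∑ i', (A j i * A k i') * (ε ω i * ε ω i') := by
    intro ω
    simp only [mulVec, dotProduct]
    rw [Finset.sum_mul_sum]
    exact Finset.sum_congr rfl fun i _ => Finset.sum_congr rfl fun i' _ => by ring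
  simp_rw [key]
  rw [integral_finset_sum _ (fun i _ => integrable_finset_sum _
      (fun i' _ => (hint i i').const_mul _))]
  have : ∀ i : Fin n, ∫ ω, ∑ i', (A j i * A k i') * (ε ω i * ε ω i') ∂μ
      = σ ^ 2 * (A j i * A k i) := by
    intro i
    rw [integral_finset_sum _ (fun i' _ => (hint i i').const_mul _)]
    simp_rw [integral_const_mul, hcov]
    simp [Finset.mul_sum, mul_comm, mul_left_comm]
  simp_rw [this]
  rw [← Finset.mul_sum, mul_apply]
  simp [transpose_apply]


/-- Covariances of the knockoff-assisted estimators: in the linear model `Y = Xβ + ε` with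
square-integrable, mean-zero, uncorrelated errors of common variance `σ²`, and with `X̃` a
knockoff matrix for `X` (`X̃ᵀX̃ = Σ = XᵀX`, `XᵀX̃ = Σ - D`, `Σ`, `D` symmetric, `2Σ - D`
and `D` invertible), the estimators `β̂⁽¹⁾ = (2Σ - D)⁻¹(X + X̃)ᵀY` and
`β̂⁽²⁾ = D⁻¹(X - X̃)ᵀY` have covariance matrices `2σ²(2Σ - D)⁻¹` and `2σ²D⁻¹`. -/
theorem knockoff_estimators_covariance {n m : ℕ}
    {Ω : Type*} [MeasurableSpace Ω] (μ : Measure Ω) [IsProbabilityMeasure μ]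
    (σ : ℝ) (hσ : 0 < σ)
    (ε : Ω → Fin n → ℝ)
    (hL2 : ∀ i, MemLp (fun ω => ε ω i) 2 μ)
    (hmean : ∀ i, ∫ ω, ε ω i ∂μ = 0)
    (hcov : ∀ i j, ∫ ω, ε ω i * ε ω j ∂μ = if i = j then σ ^ 2 else 0)
    (X Xt : Matrix (Fin n) (Fin m) ℝ) (Sg D : Matrix (Fin m) (Fin m) ℝ)
    (hSg : Sg = Xᵀ * X) (hSgsymm : Sg.IsSymm) (hDsymm : D.IsSymm)
    (hXt : Xtᵀ * Xt = Sg) (hXXt : Xᵀ * Xt = Sg - D)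
    (hInv1 : IsUnit ((2 : ℝ) • Sg - D)) (hInv2 : IsUnit D)
    (β : Fin m → ℝ) (Y : Ω → Fin n → ℝ) (hY : ∀ ω, Y ω = X *ᵥ β + ε ω)
    (b1 b2 : Ω → Fin m → ℝ)
    (hb1 : ∀ ω, b1 ω = ((2 : ℝ) • Sg - D)⁻¹ *ᵥ ((X + Xt)ᵀ *ᵥ Y ω))
    (hb2 : ∀ ω, b2 ω = D⁻¹ *ᵥ ((X - Xt)ᵀ *ᵥ Y ω)) :
    ∀ j k : Fin m,
      (∫ ω, (b1 ω j - β j) * (b1 ω k - β k) ∂μ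
        = 2 * σ ^ 2 * (((2 : ℝ) • Sg - D)⁻¹) j k) ∧
      (∫ ω, (b2 ω j - β j) * (b2 ω k - β k) ∂μ = 2 * σ ^ 2 * (D⁻¹) j k) := by
  intro j k
  set M := (2 : ℝ) • Sg - D with hM
  have hMdet : IsUnit M.det := (Matrix.isUnit_iff_isUnit_det M).mp hInv1
  have hDdet : IsUnit D.det := (Matrix.isUnit_iff_isUnit_det D).mp hInv2
  have hXtX : Xtᵀ * X = Sg - D := by
    have := congrArg Matrix.transpose hXXt
    rwa [transpose_mul, transpose_transpose, transpose_sub, hSgsymm, hDsymm] at this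
  have h1 : (X + Xt)ᵀ * X = M := by
    rw [transpose_add, Matrix.add_mul, ← hSg, hXtX, hM, two_smul]; abel
  have h2 : (X + Xt)ᵀ * (X + Xt) = (2 : ℝ) • M := by
    rw [transpose_add, Matrix.add_mul, Matrix.mul_add, Matrix.mul_add, ← hSg, hXXt, hXtX, hXt, hM]
    module
  have h3 : (X - Xt)ᵀ * X = D := by
    rw [transpose_sub, Matrix.sub_mul, ← hSg, hXtX]; abel
  have h4 : (X - Xt)ᵀ * (X - Xt) = (2 : ℝ) • D := by
    rw [transpose_sub, Matrix.sub_mul, Matrix.mul_sub, Matrix.mul_sub, ← hSg, hXXt, hXtX, hXt]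
    module
  have hMsymm : Mᵀ = M := by
    rw [hM, transpose_sub, transpose_smul, hSgsymm, hDsymm]
  -- generic step
  have main : ∀ (N : Matrix (Fin m) (Fin m) ℝ) (Z : Matrix (Fin n) (Fin m) ℝ)
      (b : Ω → Fin m → ℝ), IsUnit N.det → Nᵀ = N → Zᵀ * X = N → Zᵀ * Z = (2 : ℝ) • N →
      (∀ ω, b ω = N⁻¹ *ᵥ (Zᵀ *ᵥ Y ω)) →
      ∫ ω, (b ω j - β j) * (b ω k - β k) ∂μ = 2 * σ ^ 2 * N⁻¹ j k := by
    intro N Z b hNdet hNsymm hZX hZZ hb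
    have hdiff : ∀ ω i, b ω i - β i = ((N⁻¹ * Zᵀ) *ᵥ ε ω) i := by
      intro ω i
      rw [hb ω, hY ω, Matrix.mulVec_add, Matrix.mulVec_add, Matrix.mulVec_mulVec,
        Matrix.mulVec_mulVec, Matrix.mulVec_mulVec, Matrix.mul_assoc, hZX,
        Matrix.nonsing_inv_mul N hNdet, Matrix.one_mulVec]
      simp [Pi.add_apply]
    simp_rw [hdiff]
    rw [cov_aux μ σ ε hL2 hcov (N⁻¹ * Zᵀ) j k]
    have hAAt : (N⁻¹ * Zᵀ) * (N⁻¹ * Zᵀ)ᵀ = (2 : ℝ) • N⁻¹ := by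
      rw [transpose_mul, transpose_transpose, Matrix.transpose_nonsing_inv, hNsymm]
      calc N⁻¹ * Zᵀ * (Z * N⁻¹) = N⁻¹ * (Zᵀ * Z) * N⁻¹ := by
            rw [Matrix.mul_assoc, Matrix.mul_assoc, Matrix.mul_assoc]
        _ = (2 : ℝ) • (N⁻¹ * N * N⁻¹) := by
            rw [hZZ]; simp [Matrix.mul_smul, Matrix.smul_mul]
        _ = (2 : ℝ) • N⁻¹ := by rw [Matrix.nonsing_inv_mul N hNdet, Matrix.one_mul]
    rw [hAAt]
    simp [Matrix.smul_apply]
    ring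
  exact ⟨main M (X + Xt) b1 hMdet hMsymm h1 h2 hb1,
    main D (X - Xt) b2 hDdet (hDsymm) h3 h4 hb2⟩
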